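/- Let G = (V, E) be a graph with V = {1,...,n}, and fix k ≥ 1. Define p_i(x_i) = ∏_{j=1}^n (x_i − j) for i = 1,...,k, D = ∏_{1 ≤ i ≠ j ≤ k} (x_i − x_j), and f = ∏_{1≤i≠j≤k} ∏_{(u,v)∈E} [(x_i − u)² + (x_j − v)²]·[(x_j − u)² + (x_i − v)²] over ℚ. Then f·D ∉ ⟨p_1(x_1),...,p_k(x_k)⟩ if and only if G has an independent set of size k. -/

import Mathlib

open MvPolynomial

private lemma rename_mem_span (n k : ℕ) (a : MvPolynomial (Fin k) ℚ)
    (ha : a ∈ Ideal.span (Set.range fun i : Fin k =>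
      ∏ j ∈ Finset.range n, ((X i : MvPolynomial (Fin k) ℚ) - C ((j : ℚ) + 1)))) :
    rename Fin.succ a ∈ Ideal.span (Set.range fun i : Fin (k+1) =>
      ∏ j ∈ Finset.range n, ((X i : MvPolynomial (Fin (k+1)) ℚ) - C ((j : ℚ) + 1))) := by
  have h := Ideal.mem_map_of_mem
    (rename (Fin.succ : Fin k → Fin (k+1))).toRingHom ha
  rw [Ideal.map_span] at h
  refine Ideal.span_mono ?_ h
  rintro _ ⟨_, ⟨i, rfl⟩, rfl⟩
  exact ⟨i.succ, by simp [map_prod]⟩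

private lemma finSuccEquiv_symm_C (k : ℕ) (c : MvPolynomial (Fin k) ℚ) :
    (finSuccEquiv ℚ k).symm (Polynomial.C c) = rename Fin.succ c := by
  rw [AlgEquiv.symm_apply_eq]
  induction c using MvPolynomial.induction_on with
  | C a => simp [finSuccEquiv_apply]
  | add p q hp hq => simp only [map_add, hp, hq]
  | mul_X p i hp => simp only [map_mul, hp, rename_X, finSuccEquiv_X_succ]

private lemma mem_span_of_eval (n : ℕ) : ∀ (k : ℕ) (g : MvPolynomial (Fin k) ℚ),
    (∀ x : Fin k → Fin n, eval (fun i => ((x i : ℕ) : ℚ) + 1) g = 0) →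
    g ∈ Ideal.span (Set.range fun i : Fin k =>
      ∏ j ∈ Finset.range n, ((X i : MvPolynomial (Fin k) ℚ) - C ((j : ℚ) + 1))) := by
  intro k
  induction k with
  | zero =>
    intro g hg
    have h0 := hg Fin.elim0
    rw [eq_C_of_isEmpty g] at h0 ⊢
    rw [eval_C] at h0
    rw [h0, map_zero]
    exact Ideal.zero_mem _
  | succ k ih =>
    intro g hg
    rcases Nat.eq_zero_or_pos n with hn | hn
    · subst hn
      have h1 : (1 : MvPolynomial (Fin (k+1)) ℚ) ∈
          Set.range fun i : Fin (k+1) =>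
            ∏ j ∈ Finset.range 0, ((X i : MvPolynomial (Fin (k+1)) ℚ) - C ((j : ℚ) + 1)) :=
        ⟨0, by simp⟩
      have := (Ideal.eq_top_iff_one _).mpr (Ideal.subset_span h1)
      rw [this]
      trivial
    set e := finSuccEquiv ℚ k with he
    set P : Polynomial (MvPolynomial (Fin k) ℚ) :=
      ∏ j ∈ Finset.range n, (Polynomial.X - Polynomial.C (C ((j : ℚ) + 1))) with hPdef
    have hP : P.Monic := Polynomial.monic_prod_of_monic _ _ fun j _ => Polynomial.monic_X_sub_C _
    have hdegP : P.degree = (n : ℕ) := by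
      rw [hPdef, Polynomial.degree_prod]
      simp only [Polynomial.degree_X_sub_C, Finset.sum_const, Finset.card_range,
        nsmul_eq_mul, mul_one]
    set r := (e g) %ₘ P with hrdef
    set q := (e g) /ₘ P with hqdef
    have hr : r + P * q = e g := Polynomial.modByMonic_add_div (e g) P
    have hdr : r.degree < (n : ℕ) := lt_of_lt_of_le (Polynomial.degree_modByMonic_lt _ hP) hdegP.le
    -- all coefficients of r are in the smaller ideal
    have hcoeff : ∀ m : ℕ, r.coeff m ∈ Ideal.span (Set.range fun i : Fin k =>
        ∏ j ∈ Finset.range n, ((X i : MvPolynomial (Fin k) ℚ) - C ((j : ℚ) + 1))) := by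
      intro m
      apply ih
      intro y
      set s : Fin k → ℚ := fun i => ((y i : ℕ) : ℚ) + 1 with hs
      have hmap : r.map (eval s) = 0 := by
        apply Polynomial.eq_zero_of_natDegree_lt_card_of_eval_eq_zero _
          (f := fun x0 : Fin n => ((x0 : ℕ) : ℚ) + 1)
        · intro a b hab
          have hab' : ((a : ℕ) : ℚ) + 1 = ((b : ℕ) : ℚ) + 1 := hab
          have hab'' : ((a : ℕ) : ℚ) = ((b : ℕ) : ℚ) := by linarith
          exact Fin.val_injective (Nat.cast_injective hab'')
        · intro x0
          have hgval : Polynomial.eval (((x0 : ℕ) : ℚ) + 1) ((e g).map (eval s)) = 0 := by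
            rw [← eval_eq_eval_mv_eval']
            have hfun : (Fin.cons (((x0 : ℕ) : ℚ) + 1) s : Fin (k+1) → ℚ) =
                fun i => (((Fin.cons x0 y : Fin (k+1) → Fin n) i : ℕ) : ℚ) + 1 := by
              funext i
              refine Fin.cases ?_ ?_ i <;> simp [hs]
            rw [hfun]
            exact hg _
          have hPval : Polynomial.eval (((x0 : ℕ) : ℚ) + 1) (P.map (eval s)) = 0 := by
            rw [hPdef, Polynomial.map_prod, Polynomial.eval_prod]
            refine Finset.prod_eq_zero (Finset.mem_range.mpr x0.isLt) ?_
            simp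
          rw [← hr, Polynomial.map_add, Polynomial.map_mul, Polynomial.eval_add,
            Polynomial.eval_mul, hPval, zero_mul, add_zero] at hgval
          exact hgval
        · have h1 : (r.map (eval s)).natDegree ≤ r.natDegree := Polynomial.natDegree_map_le
          have h2 : r.natDegree < n := by
            by_cases hr0 : r = 0
            · simpa [hr0] using hn
            · exact Polynomial.natDegree_lt_iff_degree_lt hr0 |>.mpr hdr
          calc (r.map (eval s)).natDegree ≤ r.natDegree := h1
            _ < n := h2
            _ = Fintype.card (Fin n) := (Fintype.card_fin n).symm
      rw [← Polynomial.coeff_map, hmap, Polynomial.coeff_zero]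
    -- reconstruct g
    have hsymmX : (e.symm Polynomial.X : MvPolynomial (Fin (k+1)) ℚ) = X 0 := by
      rw [AlgEquiv.symm_apply_eq, he, finSuccEquiv_X_zero]
    have hg' : e.symm (r + P * q) = g := by rw [hr]; exact e.symm_apply_apply g
    rw [← hg', map_add]
    apply add_mem
    · -- e.symm r ∈ ideal
      have hrsum : e.symm r = ∑ m ∈ r.support,
          (rename Fin.succ (r.coeff m)) * X 0 ^ m := by
        conv_lhs => rw [Polynomial.as_sum_support r]
        rw [map_sum]
        refine Finset.sum_congr rfl fun m _ => ?_
        rw [← Polynomial.C_mul_X_pow_eq_monomial, map_mul, map_pow, finSuccEquiv_symm_C, hsymmX]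
      rw [hrsum]
      exact Submodule.sum_mem _ fun m _ =>
        Ideal.mul_mem_right _ _ (rename_mem_span n k _ (hcoeff m))
    · -- e.symm (P * q) ∈ ideal
      have hPs : e.symm P = ∏ j ∈ Finset.range n,
          ((X (0 : Fin (k+1)) : MvPolynomial (Fin (k+1)) ℚ) - C ((j : ℚ) + 1)) := by
        rw [AlgEquiv.symm_apply_eq, map_prod, hPdef]
        refine Finset.prod_congr rfl fun j _ => ?_
        rw [map_sub, he, finSuccEquiv_X_zero]
        congr 1
        simp [finSuccEquiv_apply]
      rw [map_mul, hPs]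
      exact Ideal.mul_mem_right _ _ (Ideal.subset_span ⟨0, rfl⟩)

theorem stmt_15 (n k : ℕ) (hk : 1 ≤ k) (E : Finset (Fin n × Fin n)) :
    (∏ q ∈ Finset.univ.filter (fun q : Fin k × Fin k => q.1 ≠ q.2),
        ∏ uv ∈ E,
          (((X q.1 - C ((uv.1 : ℕ) + 1 : ℚ)) ^ 2 + (X q.2 - C ((uv.2 : ℕ) + 1 : ℚ)) ^ 2) *
            ((X q.2 - C ((uv.1 : ℕ) + 1 : ℚ)) ^ 2 + (X q.1 - C ((uv.2 : ℕ) + 1 : ℚ)) ^ 2))) *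
      (∏ q ∈ Finset.univ.filter (fun q : Fin k × Fin k => q.1 ≠ q.2),
        ((X q.1 : MvPolynomial (Fin k) ℚ) - X q.2)) ∉
      Ideal.span (Set.range fun i : Fin k =>
        ∏ j ∈ Finset.range n, ((X i : MvPolynomial (Fin k) ℚ) - C ((j : ℚ) + 1))) ↔
    ∃ ι : Fin k → Fin n, Function.Injective ι ∧
      ∀ a b : Fin k, a ≠ b → (ι a, ι b) ∉ E := by
  constructor
  · intro hmem
    by_contra h
    push_neg at h
    apply hmem
    apply mem_span_of_eval
    intro x
    by_cases hinj : Function.Injective x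
    · obtain ⟨a, b, hab, hE⟩ := h x hinj
      rw [map_mul]
      apply mul_eq_zero_of_left
      rw [map_prod]
      refine Finset.prod_eq_zero
        (Finset.mem_filter.mpr ⟨Finset.mem_univ (a, b), hab⟩) ?_
      rw [map_prod]
      refine Finset.prod_eq_zero hE ?_
      simp
    · obtain ⟨a, b, hxab, hab⟩ : ∃ a b, x a = x b ∧ a ≠ b := by
        unfold Function.Injective at hinj
        push_neg at hinj
        exact hinj
      rw [map_mul]
      apply mul_eq_zero_of_right
      rw [map_prod]
      refine Finset.prod_eq_zero
        (Finset.mem_filter.mpr ⟨Finset.mem_univ (a, b), hab⟩) ?_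
      simp [hxab]
  · rintro ⟨ι, hinj, hind⟩ hmem
    set pt : Fin k → ℚ := fun i => ((ι i : ℕ) : ℚ) + 1 with hpt
    have hker : Ideal.span (Set.range fun i : Fin k =>
        ∏ j ∈ Finset.range n, ((X i : MvPolynomial (Fin k) ℚ) - C ((j : ℚ) + 1))) ≤
        RingHom.ker (eval pt) := by
      rw [Ideal.span_le]
      rintro _ ⟨i, rfl⟩
      rw [SetLike.mem_coe, RingHom.mem_ker, map_prod]
      refine Finset.prod_eq_zero (Finset.mem_range.mpr (ι i).isLt) ?_
      simp [hpt]
    have h0 : eval pt _ = 0 := RingHom.mem_ker.mp (hker hmem)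
    rw [map_mul, map_prod, map_prod] at h0
    have key : ∀ a b : Fin k, a ≠ b → ∀ uv ∈ E,
        (pt a - ((uv.1 : ℕ) + 1)) ^ 2 + (pt b - ((uv.2 : ℕ) + 1)) ^ 2 ≠ 0 := by
      intro a b hab uv hE h00
      have hA2 : (pt a - ((uv.1 : ℕ) + 1)) ^ 2 = 0 := by
        nlinarith [sq_nonneg (pt a - ((uv.1 : ℕ) + 1 : ℚ)), sq_nonneg (pt b - ((uv.2 : ℕ) + 1 : ℚ))]
      have hB2 : (pt b - ((uv.2 : ℕ) + 1)) ^ 2 = 0 := by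
        nlinarith [sq_nonneg (pt a - ((uv.1 : ℕ) + 1 : ℚ)), sq_nonneg (pt b - ((uv.2 : ℕ) + 1 : ℚ))]
      have hA : pt a - ((uv.1 : ℕ) + 1) = 0 := by
        exact pow_eq_zero_iff (by norm_num) |>.mp hA2
      have hB : pt b - ((uv.2 : ℕ) + 1) = 0 := by
        exact pow_eq_zero_iff (by norm_num) |>.mp hB2
      have h1 : ι a = uv.1 := by
        apply Fin.val_injective
        have : ((ι a : ℕ) : ℚ) = ((uv.1 : ℕ) : ℚ) := by
          simp only [hpt] at hA; linarith
        exact_mod_cast this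
      have h2 : ι b = uv.2 := by
        apply Fin.val_injective
        have : ((ι b : ℕ) : ℚ) = ((uv.2 : ℕ) : ℚ) := by
          simp only [hpt] at hB; linarith
        exact_mod_cast this
      apply hind a b hab
      rw [h1, h2]
      exact hE
    apply mul_ne_zero ?_ ?_ h0
    · rw [Finset.prod_ne_zero_iff]
      intro q hq
      have hq' : q.1 ≠ q.2 := (Finset.mem_filter.mp hq).2
      rw [map_prod, Finset.prod_ne_zero_iff]
      intro uv huv
      simp only [map_mul, map_add, map_pow, map_sub, eval_X, eval_C]
      exact mul_ne_zero (key q.1 q.2 hq' uv huv) (key q.2 q.1 hq'.symm uv huv)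
    · rw [Finset.prod_ne_zero_iff]
      intro q hq
      have hq' : q.1 ≠ q.2 := (Finset.mem_filter.mp hq).2
      simp only [map_sub, eval_X]
      intro hzz
      apply hq'
      apply hinj
      apply Fin.val_injective
      have : ((ι q.1 : ℕ) : ℚ) = ((ι q.2 : ℕ) : ℚ) := by
        simp only [hpt] at hzz; linarith
      exact_mod_cast this
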